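/- Let X be a Banach space with a Kadec norm. Then for every ε > 0 there exists a countable cover X = ⋃_{i≥0} X_i such that for every x ∈ X_i there exists a weakly open neighborhood W of x with W ∩ X_i ⊆ x + εB, where B is the closed unit ball. In particular, each point of X_i has a weak neighborhood whose intersection with X_i has norm diameter at most 2ε. -/

import Mathlib

open Metric Set

/-- A set is weakly open if its image in `WeakSpace ℝ X` is open. -/
def WeaklyOpen {X : Type*} [NormedAddCommGroup X] [NormedSpace ℝ X] (s : Set X) : Prop :=
  IsOpen ((toWeakSpace ℝ X) '' s)

/-- The norm is Kadec: the weak and norm topologies induce the same relatively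
open sets on the unit sphere. -/
def KadecNorm (X : Type*) [NormedAddCommGroup X] [NormedSpace ℝ X] : Prop :=
  ∀ T : Set X,
    (∃ U : Set X, IsOpen U ∧ T = U ∩ {x : X | ‖x‖ = 1}) ↔
    (∃ U : Set X, WeaklyOpen U ∧ T = U ∩ {x : X | ‖x‖ = 1})

section Aux

variable {X : Type*} [NormedAddCommGroup X] [NormedSpace ℝ X]

noncomputable instance : ContinuousSMul ℝ (WeakSpace ℝ X) := WeakBilin.instContinuousSMul _

lemma aux_inj_pairing : Function.Injective ((topDualPairing ℝ X).flip) := by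
  intro a b h
  rw [← sub_eq_zero]
  refine NormedSpace.eq_zero_of_forall_dual_eq_zero ℝ (fun f => ?_)
  have : (topDualPairing ℝ X).flip a f = (topDualPairing ℝ X).flip b f := by rw [h]
  simp only [LinearMap.flip_apply, topDualPairing_apply] at this
  simp [this]

instance : T2Space (WeakSpace ℝ X) := (WeakBilin.isEmbedding aux_inj_pairing).t2Space

lemma image_toWeakSpace_eq (s : Set X) :
    (toWeakSpace ℝ X) '' s = (toWeakSpace ℝ X).symm ⁻¹' s := by
  ext z
  constructor
  · rintro ⟨y, hy, rfl⟩; simpa using hy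
  · intro hz; exact ⟨_, hz, (toWeakSpace ℝ X).apply_symm_apply z⟩

lemma weaklyOpen_univ : WeaklyOpen (univ : Set X) := by
  unfold WeaklyOpen
  rw [image_toWeakSpace_eq]
  simp

lemma aux_cont_eval (l : X →L[ℝ] ℝ) :
    Continuous fun z : WeakSpace ℝ X => l ((toWeakSpace ℝ X).symm z) :=
  WeakBilin.eval_continuous ((topDualPairing ℝ X).flip) l

lemma weaklyOpen_basic (I : Finset (X →L[ℝ] ℝ)) (x : X) (c : ℝ) :
    WeaklyOpen {y : X | ∀ l ∈ I, |l y - l x| < c} := by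
  unfold WeaklyOpen
  rw [image_toWeakSpace_eq]
  have he : (toWeakSpace ℝ X).symm ⁻¹' {y : X | ∀ l ∈ I, |l y - l x| < c}
      = ⋂ l ∈ I, {z : WeakSpace ℝ X | |l ((toWeakSpace ℝ X).symm z) - l x| < c} := by
    ext z; simp
  rw [he]
  refine isOpen_biInter_finset fun l _ => ?_
  exact isOpen_lt (((aux_cont_eval l).sub continuous_const).abs) continuous_const

lemma weaklyOpen_smul_preimage {U : Set X} (hU : WeaklyOpen U) (R : ℝ) :
    WeaklyOpen {y : X | R⁻¹ • y ∈ U} := by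
  unfold WeaklyOpen at *
  rw [image_toWeakSpace_eq] at *
  have hcont : Continuous fun z : WeakSpace ℝ X => R⁻¹ • z := continuous_const_smul _
  have he : (toWeakSpace ℝ X).symm ⁻¹' {y : X | R⁻¹ • y ∈ U}
      = (fun z : WeakSpace ℝ X => R⁻¹ • z) ⁻¹' ((toWeakSpace ℝ X).symm ⁻¹' U) := by
    ext z
    simp [Set.mem_preimage, map_smul]
  rw [he]
  exact hU.preimage hcont

lemma exists_basic_subset {U : Set X} (hU : WeaklyOpen U) {x : X} (hx : x ∈ U) :
    ∃ (I : Finset (X →L[ℝ] ℝ)) (c : ℝ), 0 < c ∧ {y : X | ∀ l ∈ I, |l y - l x| < c} ⊆ U := by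
  have hind : Topology.IsInducing
      (fun (z : WeakSpace ℝ X) (l : X →L[ℝ] ℝ) => ((topDualPairing ℝ X).flip) z l) := ⟨rfl⟩
  have hopen : IsOpen ((toWeakSpace ℝ X) '' U) := hU
  rw [hind.isOpen_iff] at hopen
  obtain ⟨t, ht, hpre⟩ := hopen
  have hxt : (fun l : X →L[ℝ] ℝ => l x) ∈ t := by
    have hmem : (toWeakSpace ℝ X) x ∈ (toWeakSpace ℝ X) '' U := ⟨x, hx, rfl⟩
    rw [← hpre] at hmem
    exact hmem
  obtain ⟨I, u, hu, hsub⟩ := isOpen_pi_iff.mp ht _ hxt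
  have hball : ∀ l ∈ I, ∃ ε > 0, Metric.ball (l x) ε ⊆ u l := fun l hl =>
    Metric.isOpen_iff.mp (hu l hl).1 _ (hu l hl).2
  choose! eps heps hballs using hball
  have key : ∀ y : X, (∀ l ∈ I, l y ∈ u l) → y ∈ U := by
    intro y hy
    have h2 : (fun l : X →L[ℝ] ℝ => l y) ∈ t := hsub (fun l hl => hy l hl)
    have hmem : (toWeakSpace ℝ X) y ∈ (toWeakSpace ℝ X) '' U := by
      rw [← hpre]; exact h2
    obtain ⟨y', hy', he⟩ := hmem
    rwa [← (toWeakSpace ℝ X).injective he]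
  by_cases hI : I.Nonempty
  · refine ⟨I, I.inf' hI eps, ?_, ?_⟩
    · rw [Finset.lt_inf'_iff]
      exact fun l hl => heps l hl
    · intro y hy
      refine key y (fun l hl => hballs l hl ?_)
      rw [Metric.mem_ball, Real.dist_eq]
      exact lt_of_lt_of_le (hy l hl) (Finset.inf'_le _ hl)
  · refine ⟨I, 1, one_pos, fun y _ => key y (fun l hl => absurd ⟨l, hl⟩ hI)⟩

lemma exists_common_kernel (hfd : ¬ FiniteDimensional ℝ X) (I : Finset (X →L[ℝ] ℝ)) :
    ∃ f₀ : X, f₀ ≠ 0 ∧ ∀ l ∈ I, l f₀ = 0 := by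
  let Φ : X →ₗ[ℝ] ({l : X →L[ℝ] ℝ // l ∈ I} → ℝ) :=
    LinearMap.pi fun l : {l : X →L[ℝ] ℝ // l ∈ I} => ((l : X →L[ℝ] ℝ) : X →ₗ[ℝ] ℝ)
  have hker : LinearMap.ker Φ ≠ ⊥ := by
    intro hbot
    exact hfd (FiniteDimensional.of_injective Φ (LinearMap.ker_eq_bot.mp hbot))
  obtain ⟨f₀, hmem, hne⟩ := (Submodule.ne_bot_iff _).mp hker
  refine ⟨f₀, hne, fun l hl => ?_⟩
  have h0 : Φ f₀ = 0 := LinearMap.mem_ker.mp hmem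
  have := congrFun h0 ⟨l, hl⟩
  simpa [Φ] using this

lemma exists_sphere_hit (y f₀ : X) (hf₀ : f₀ ≠ 0) {R : ℝ} (hy : ‖y‖ ≤ R) :
    ∃ t : ℝ, 0 ≤ t ∧ ‖y + t • f₀‖ = R := by
  have hf₀' : 0 < ‖f₀‖ := norm_pos_iff.mpr hf₀
  set T : ℝ := (R + ‖y‖ + 1) / ‖f₀‖ with hT
  have hR0 : 0 ≤ R := le_trans (norm_nonneg y) hy
  have hT0 : 0 ≤ T := by positivity
  have hcont : ContinuousOn (fun t : ℝ => ‖y + t • f₀‖) (Icc 0 T) := by fun_prop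
  have hTf : T * ‖f₀‖ = R + ‖y‖ + 1 := div_mul_cancel₀ _ (ne_of_gt hf₀')
  have hend : R ≤ ‖y + T • f₀‖ := by
    have h1 : ‖(y + T • f₀) - y‖ ≤ ‖y + T • f₀‖ + ‖y‖ := norm_sub_le _ _
    have h2 : ‖(y + T • f₀) - y‖ = T * ‖f₀‖ := by
      simp [norm_smul, abs_of_nonneg hT0]
    rw [h2, hTf] at h1
    linarith
  have hstart : ‖y + (0 : ℝ) • f₀‖ = ‖y‖ := by simp
  have hmem : R ∈ Icc (‖y + (0:ℝ) • f₀‖) (‖y + T • f₀‖) := by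
    rw [hstart]; exact ⟨hy, hend⟩
  obtain ⟨t, htmem, ht⟩ := intermediate_value_Icc hT0 hcont hmem
  exact ⟨t, htmem.1, ht⟩

lemma seg_bound {x y f₀ : X} {a b δ : ℝ} (ha : 0 ≤ a) (hb : 0 ≤ b)
    (hp : ‖(y + a • f₀) - x‖ ≤ δ) (hm : ‖(y - b • f₀) - x‖ ≤ δ) : ‖y - x‖ ≤ δ := by
  rcases eq_or_lt_of_le (add_nonneg ha hb) with h0 | hpos
  · have ha0 : a = 0 := by linarith [ha, hb, h0.symm ▸ (rfl : a + b = a + b)]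
    simpa [ha0] using hp
  · have hab : a + b ≠ 0 := ne_of_gt hpos
    have key : y - x = (b / (a+b)) • ((y + a • f₀) - x) + (a / (a+b)) • ((y - b • f₀) - x) := by
      match_scalars <;> (field_simp; try ring)
    calc ‖y - x‖ = ‖(b / (a+b)) • ((y + a • f₀) - x) + (a / (a+b)) • ((y - b • f₀) - x)‖ := by
          rw [key]
      _ ≤ (b / (a+b)) * δ + (a / (a+b)) * δ := by
          refine (norm_add_le _ _).trans (add_le_add ?_ ?_)
          · rw [norm_smul, Real.norm_eq_abs, abs_of_nonneg (by positivity)]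
            exact mul_le_mul_of_nonneg_left hp (by positivity)
          · rw [norm_smul, Real.norm_eq_abs, abs_of_nonneg (by positivity)]
            exact mul_le_mul_of_nonneg_left hm (by positivity)
      _ = δ := by field_simp; ring

lemma line_lemma (hfd : ¬ FiniteDimensional ℝ X) (I : Finset (X →L[ℝ] ℝ)) (x : X) (c : ℝ)
    {R δ : ℝ}
    (hVS : ∀ y : X, (∀ l ∈ I, |l y - l x| < c) → ‖y‖ = R → ‖y - x‖ ≤ δ) :
    ∀ y : X, (∀ l ∈ I, |l y - l x| < c) → ‖y‖ ≤ R → ‖y - x‖ ≤ δ := by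
  intro y hyV hyR
  obtain ⟨f₀, hf₀, hker⟩ := exists_common_kernel hfd I
  obtain ⟨a, ha, hA⟩ := exists_sphere_hit y f₀ hf₀ hyR
  obtain ⟨b, hb, hB⟩ := exists_sphere_hit y (-f₀) (by simpa using hf₀) hyR
  have hmemA : ∀ l ∈ I, |l (y + a • f₀) - l x| < c := by
    intro l hl
    have : l (y + a • f₀) = l y := by
      simp [map_add, map_smul, hker l hl]
    rw [this]; exact hyV l hl
  have hmemB : ∀ l ∈ I, |l (y + b • (-f₀)) - l x| < c := by
    intro l hl
    have : l (y + b • (-f₀)) = l y := by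
      simp [map_add, map_smul, hker l hl]
    rw [this]; exact hyV l hl
  have hp := hVS _ hmemA hA
  have hm := hVS _ hmemB hB
  have hB' : y + b • (-f₀) = y - b • f₀ := by
    rw [smul_neg]; abel
  rw [hB'] at hm
  exact seg_bound ha hb hp hm

lemma kadec_sphere_nbhd (hK : KadecNorm X) {x : X} (hx : x ≠ 0) {r : ℝ} (hr : 0 < r) :
    ∃ U : Set X, WeaklyOpen U ∧ x ∈ U ∧ ∀ y ∈ U, ‖y‖ = ‖x‖ → ‖y - x‖ ≤ r := by
  set R : ℝ := ‖x‖ with hR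
  have hR0 : 0 < R := norm_pos_iff.mpr hx
  set u : X := R⁻¹ • x with hu
  have hu1 : ‖u‖ = 1 := by
    rw [hu, norm_smul, Real.norm_eq_abs, abs_of_pos (by positivity)]
    field_simp
    exact hR.symm
  set ρ : ℝ := r / R with hρ
  have hρ0 : 0 < ρ := by positivity
  obtain ⟨U₀, hU₀, hTeq⟩ := (hK (Metric.ball u ρ ∩ {x : X | ‖x‖ = 1})).mp
    ⟨Metric.ball u ρ, Metric.isOpen_ball, rfl⟩
  have hum : u ∈ U₀ ∩ {x : X | ‖x‖ = 1} := by
    rw [← hTeq]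
    exact ⟨Metric.mem_ball_self hρ0, hu1⟩
  refine ⟨{y : X | R⁻¹ • y ∈ U₀}, weaklyOpen_smul_preimage hU₀ R, hum.1, ?_⟩
  intro y hy hyR
  have h1 : R⁻¹ • y ∈ U₀ ∩ {x : X | ‖x‖ = 1} := by
    refine ⟨hy, ?_⟩
    simp only [Set.mem_setOf_eq, norm_smul, Real.norm_eq_abs, abs_of_pos (by positivity : (0:ℝ) < R⁻¹), hyR]
    field_simp
  rw [← hTeq] at h1
  have h2 : ‖R⁻¹ • y - u‖ < ρ := by
    have := h1.1
    rwa [Metric.mem_ball, dist_eq_norm] at this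
  have h3 : R⁻¹ • y - u = R⁻¹ • (y - x) := by
    rw [hu, smul_sub]
  rw [h3, norm_smul, Real.norm_eq_abs, abs_of_pos (by positivity : (0:ℝ) < R⁻¹)] at h2
  have : ‖y - x‖ < ρ * R := by
    rw [hρ] at h2 ⊢
    calc ‖y - x‖ = R⁻¹ * ‖y - x‖ * R := by field_simp
    _ < r / R * R := by
        apply mul_lt_mul_of_pos_right h2 hR0
  rw [hρ] at this
  have : ‖y - x‖ < r := by
    rwa [div_mul_cancel₀ _ (ne_of_gt hR0)] at this
  exact this.le

lemma weaklyOpen_of_fd (hfd : FiniteDimensional ℝ X) {s : Set X} (hs : IsOpen s) :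
    WeaklyOpen s := by
  haveI : FiniteDimensional ℝ (WeakSpace ℝ X) := hfd
  have hcont : Continuous fun z : WeakSpace ℝ X => (toWeakSpace ℝ X).symm z :=
    LinearMap.continuous_of_finiteDimensional
      ((toWeakSpace ℝ X).symm : WeakSpace ℝ X →ₗ[ℝ] X)
  unfold WeaklyOpen
  rw [image_toWeakSpace_eq]
  exact hs.preimage hcont

/-- Main pointwise lemma: each point has, for each `δ`, a weak neighborhood whose
intersection with a slightly larger ball is contained in the `δ`-ball around it. -/
lemma key_lemma (hK : KadecNorm X) (x : X) {δ : ℝ} (hδ : 0 < δ) :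
    ∃ η > 0, ∃ W : Set X, WeaklyOpen W ∧ x ∈ W ∧
      ∀ y ∈ W, ‖y‖ ≤ ‖x‖ + η → ‖y - x‖ ≤ δ := by
  by_cases hfd : FiniteDimensional ℝ X
  · refine ⟨1, one_pos, Metric.ball x δ, weaklyOpen_of_fd hfd Metric.isOpen_ball,
      Metric.mem_ball_self hδ, fun y hy _ => ?_⟩
    rw [Metric.mem_ball, dist_eq_norm] at hy
    exact hy.le
  by_cases hx : x = 0
  · refine ⟨δ, hδ, Set.univ, weaklyOpen_univ, Set.mem_univ x, fun y _ hy => ?_⟩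
    subst hx
    simpa using hy
  set R : ℝ := ‖x‖ with hR
  have hR0 : 0 < R := norm_pos_iff.mpr hx
  obtain ⟨U, hUopen, hxU, hUS⟩ := kadec_sphere_nbhd hK hx (show (0:ℝ) < δ/4 by positivity)
  obtain ⟨I, c, hc, hIU⟩ := exists_basic_subset hUopen hxU
  have hVB : ∀ y : X, (∀ l ∈ I, |l y - l x| < c) → ‖y‖ ≤ R → ‖y - x‖ ≤ δ/4 := by
    refine line_lemma hfd I x c (fun y hy hyR => hUS y (hIU hy) hyR)
  set M : ℝ := ∑ l ∈ I, |l x| with hM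
  have hM0 : 0 ≤ M := Finset.sum_nonneg fun l _ => abs_nonneg _
  set η : ℝ := min (δ/2) (c * R / (2 * (M + 1))) with hη
  have hη0 : 0 < η := lt_min (by positivity) (by positivity)
  refine ⟨η, hη0, {y : X | ∀ l ∈ I, |l y - l x| < c/2}, weaklyOpen_basic I x (c/2),
    by simp [hc, half_pos hc], ?_⟩
  intro y hyW hynorm
  set t : ℝ := R / (R + η) with ht
  have hRη : 0 < R + η := by positivity
  have ht0 : 0 < t := by positivity
  have ht1 : t ≤ 1 := by
    rw [ht, div_le_one hRη]; linarith
  have h1t : 1 - t = η / (R + η) := by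
    rw [ht]; field_simp; ring
  -- y' := t • y lands in the basic c-neighborhood and in the R-ball
  have hy' : ∀ l ∈ I, |l (t • y) - l x| < c := by
    intro l hl
    have hdecomp : l (t • y) - l x = t * (l y - l x) + (t - 1) * (l x) := by
      rw [map_smul, smul_eq_mul]; ring
    rw [hdecomp]
    have hbound1 : |t * (l y - l x)| < t * (c/2) := by
      rw [abs_mul, abs_of_pos ht0]
      exact mul_lt_mul_of_pos_left (hyW l hl) ht0
    have hlM : |l x| ≤ M := Finset.single_le_sum (fun l _ => abs_nonneg ((l : X →L[ℝ] ℝ) x)) hl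
    have hηR : η / R ≤ c / (2 * (M + 1)) := by
      rw [div_le_div_iff₀ hR0 (by positivity)]
      calc η * (2 * (M + 1)) ≤ (c * R / (2 * (M + 1))) * (2 * (M + 1)) := by
            have := min_le_right (δ/2) (c * R / (2 * (M + 1)))
            rw [← hη] at this
            nlinarith [hM0]
        _ = c * R := by field_simp
    have hbound2 : |(t - 1) * (l x)| ≤ c/2 := by
      rw [abs_mul]
      have habs : |t - 1| = 1 - t := by
        rw [abs_sub_comm, abs_of_nonneg (by linarith)]
      rw [habs, h1t]
      have h2 : η / (R + η) ≤ η / R := by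
        apply div_le_div_of_nonneg_left hη0.le hR0; linarith
      calc η / (R + η) * |l x| ≤ (c / (2 * (M + 1))) * M := by
            apply mul_le_mul (h2.trans hηR) hlM (abs_nonneg _) (by positivity)
        _ ≤ c/2 := by
            rw [div_mul_eq_mul_div, div_le_div_iff₀ (by positivity) (by positivity)]
            nlinarith
    calc |t * (l y - l x) + (t - 1) * (l x)| ≤ |t * (l y - l x)| + |(t - 1) * (l x)| :=
          abs_add_le _ _
      _ < t * (c/2) + c/2 := by linarith
      _ ≤ c := by nlinarith
  have hy'R : ‖t • y‖ ≤ R := by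
    rw [norm_smul, Real.norm_eq_abs, abs_of_pos ht0, ht]
    calc R / (R + η) * ‖y‖ ≤ R / (R + η) * (R + η) := by
          apply mul_le_mul_of_nonneg_left hynorm (by positivity)
      _ = R := by field_simp
  have hclose := hVB (t • y) hy' hy'R
  have hyy' : ‖y - t • y‖ ≤ η := by
    have : y - t • y = (1 - t) • y := by rw [sub_smul, one_smul]
    rw [this, norm_smul, Real.norm_eq_abs, abs_of_nonneg (by linarith), h1t]
    calc η / (R + η) * ‖y‖ ≤ η / (R + η) * (R + η) := by
          apply mul_le_mul_of_nonneg_left hynorm (by positivity)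
      _ = η := by field_simp
  have hηδ : η ≤ δ/2 := min_le_left _ _
  calc ‖y - x‖ = ‖(y - t • y) + (t • y - x)‖ := by abel_nf
    _ ≤ ‖y - t • y‖ + ‖t • y - x‖ := norm_add_le _ _
    _ ≤ η + δ/4 := add_le_add hyy' hclose
    _ ≤ δ := by linarith

end Aux

theorem stmt3 {X : Type*} [NormedAddCommGroup X] [NormedSpace ℝ X] [CompleteSpace X]
    (hK : KadecNorm X) (ε : ℝ) (hε : 0 < ε) :
    ∃ Xi : ℕ → Set X, (⋃ i, Xi i) = Set.univ ∧
      ∀ i : ℕ, ∀ x ∈ Xi i, ∃ W : Set X, WeaklyOpen W ∧ x ∈ W ∧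
        W ∩ Xi i ⊆ Metric.closedBall x ε ∧ Metric.diam (W ∩ Xi i) ≤ 2 * ε := by
  set q : ℕ → ℝ := fun n => (((Denumerable.eqv ℚ).symm n : ℚ) : ℝ) with hq
  refine ⟨fun n => {x : X | ‖x‖ ≤ q n ∧ ∃ W : Set X, WeaklyOpen W ∧ x ∈ W ∧
      ∀ y ∈ W, ‖y‖ ≤ q n → ‖y - x‖ ≤ ε}, ?_, ?_⟩
  · rw [Set.eq_univ_iff_forall]
    intro x
    obtain ⟨η, hη0, W, hWopen, hxW, hW⟩ := key_lemma hK x hε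
    obtain ⟨r, hr1, hr2⟩ := exists_rat_btwn (show ‖x‖ < ‖x‖ + η by linarith)
    refine Set.mem_iUnion.mpr ⟨(Denumerable.eqv ℚ) r, ?_⟩
    have hqe : q ((Denumerable.eqv ℚ) r) = (r : ℝ) := by
      rw [hq]; simp
    rw [Set.mem_setOf_eq, hqe]
    exact ⟨hr1.le, W, hWopen, hxW, fun y hy hyr => hW y hy (by linarith)⟩
  · rintro i x ⟨hxq, W, hWopen, hxW, hW⟩
    have hsub : W ∩ {x : X | ‖x‖ ≤ q i ∧ ∃ W : Set X, WeaklyOpen W ∧ x ∈ W ∧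
        ∀ y ∈ W, ‖y‖ ≤ q i → ‖y - x‖ ≤ ε} ⊆ Metric.closedBall x ε := by
      rintro y ⟨hyW, hyq, -⟩
      rw [Metric.mem_closedBall, dist_eq_norm]
      exact hW y hyW hyq
    refine ⟨W, hWopen, hxW, hsub, ?_⟩
    calc Metric.diam _ ≤ Metric.diam (Metric.closedBall x ε) :=
          Metric.diam_mono hsub Metric.isBounded_closedBall
      _ ≤ 2 * ε := Metric.diam_closedBall hε.le
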